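/- Let B > 0 and let X = (X₁, X₂) be uniform on {0,B}². Define the policy σ^S(x) = {1} if x₁ = x₂ and σ^S(x) = {2} otherwise. Then: (i) σ^S is fully revealing for a sophisticated agent (the map x ↦ (σ^S(x), x_{σ^S(x)}) is injective on the support), so R^S(σ^S) = 0; (ii) the constant policy σ^N ≡ {1} is naive-optimal with R^N(σ^N) = B²/4, and since its selection is constant, a sophisticated agent gains nothing: R^S(σ^N) = R^N(σ^N) = B²/4; hence the price of simplicity is Δ^S = R^S(σ^N) − R^S(σ^S) = B²/4. -/

import Mathlib

/-!
Statement 17: For `B > 0` and `X` uniform on `{0,B}²`, the policy `σ^S`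
(reveal coordinate 1 iff `x₁ = x₂`) is fully revealing for a sophisticated
agent (so `R^S(σ^S) = 0`); the constant policy `σ^N ≡ {1}` is naive-optimal
with `R^N(σ^N) = B²/4` and, having a constant selection, yields
`R^S(σ^N) = R^N(σ^N) = B²/4`; hence the price of simplicity is
`Δ^S = R^S(σ^N) − R^S(σ^S) = B²/4`.
-/

open Finset
open scoped Classical

noncomputable section

/-- The support of the uniform prior: the four states of `{0,B}²`. -/
def supp17 (B : ℝ) : Finset (ℝ × ℝ) := {(0, 0), (0, B), (B, 0), (B, B)}

/-- Coordinates of an instance. -/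
def coord17 (j : Fin 2) (x : ℝ × ℝ) : ℝ := if j = 0 then x.1 else x.2

/-- The signal `(I, x_I)` sent by a policy at instance `x`. -/
def sig17 (pol : ℝ × ℝ → Finset (Fin 2)) (x : ℝ × ℝ) :
    Finset (Fin 2) × (Fin 2 → ℝ) :=
  (pol x, fun j => if j ∈ pol x then coord17 j x else 0)

/-- Naive conditional mean `E[X_j | X_I = x_I]` under the uniform prior. -/
def condMean17 (B : ℝ) (I : Finset (Fin 2)) (x : ℝ × ℝ) (j : Fin 2) : ℝ :=
  (∑ y ∈ (supp17 B).filter (fun y => ∀ i ∈ I, coord17 i y = coord17 i x),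
      coord17 j y) /
    (((supp17 B).filter (fun y => ∀ i ∈ I, coord17 i y = coord17 i x)).card : ℝ)

/-- Naive prediction. -/
def predN17 (B : ℝ) (pol : ℝ × ℝ → Finset (Fin 2)) (x : ℝ × ℝ) (j : Fin 2) : ℝ :=
  if j ∈ pol x then coord17 j x else condMean17 B (pol x) x j

/-- Expected naive loss (squared recovery) under the uniform prior. -/
def RN17 (B : ℝ) (pol : ℝ × ℝ → Finset (Fin 2)) : ℝ :=
  (1 / 4) * ∑ x ∈ supp17 B, ∑ j : Fin 2, (coord17 j x - predN17 B pol x j) ^ 2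

/-- Sophisticated prediction: posterior mean over states with the same signal. -/
def predS17 (B : ℝ) (pol : ℝ × ℝ → Finset (Fin 2)) (x : ℝ × ℝ) (j : Fin 2) : ℝ :=
  (∑ y ∈ (supp17 B).filter (fun y => sig17 pol y = sig17 pol x), coord17 j y) /
    (((supp17 B).filter (fun y => sig17 pol y = sig17 pol x)).card : ℝ)

/-- Expected sophisticated loss (squared recovery) under the uniform prior. -/
def RS17 (B : ℝ) (pol : ℝ × ℝ → Finset (Fin 2)) : ℝ :=
  (1 / 4) * ∑ x ∈ supp17 B, ∑ j : Fin 2, (coord17 j x - predS17 B pol x j) ^ 2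

/-- The policy revealing coordinate 1 iff the two coordinates agree. -/
def sophPol17 (x : ℝ × ℝ) : Finset (Fin 2) :=
  if x.1 = x.2 then {0} else {1}

/-- The constant policy always revealing coordinate 1. -/
def naivePol17 : ℝ × ℝ → Finset (Fin 2) := fun _ => {0}

lemma rn_naive17 (B:ℝ) (hB : B ≠ 0) : RN17 B naivePol17 = B^2/4 := by
  simp only [RN17, supp17, naivePol17, predN17, condMean17, coord17,
    Finset.mem_singleton, forall_eq]
  norm_num [Finset.sum_insert, Finset.mem_insert, Fin.sum_univ_two,
    Finset.filter_insert, Finset.filter_singleton, Finset.mem_singleton,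
    Prod.ext_iff, hB, Ne.symm hB]
  ring

lemma rs_soph17 (B:ℝ) (hB : B ≠ 0) : RS17 B sophPol17 = 0 := by
  simp only [RS17, supp17, sophPol17, predS17, sig17, coord17]
  norm_num [Finset.sum_insert, Finset.mem_insert, Fin.sum_univ_two,
    Finset.filter_insert, Finset.filter_singleton, Finset.mem_singleton,
    Prod.ext_iff, funext_iff, Fin.forall_fin_two, hB, Ne.symm hB]

lemma rs_naive17 (B:ℝ) (hB : B ≠ 0) : RS17 B naivePol17 = B^2/4 := by
  simp only [RS17, supp17, naivePol17, predS17, sig17, coord17]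
  norm_num [Finset.sum_insert, Finset.mem_insert, Fin.sum_univ_two,
    Finset.filter_insert, Finset.filter_singleton, Finset.mem_singleton,
    Prod.ext_iff, funext_iff, Fin.forall_fin_two, hB, Ne.symm hB]
  ring

lemma inj17 (B:ℝ) (hB : B ≠ 0) : Set.InjOn (sig17 sophPol17) ↑(supp17 B) := by
  intro x hx y hy h
  simp only [supp17, Finset.coe_insert, Set.mem_insert_iff, Finset.coe_singleton,
    Set.mem_singleton_iff] at hx hy
  rcases hx with rfl|rfl|rfl|rfl <;> rcases hy with rfl|rfl|rfl|rfl <;>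
    simp_all [sig17, sophPol17, coord17, Prod.ext_iff, funext_iff,
      Fin.forall_fin_two, Finset.singleton_inj, hB, Ne.symm hB]

lemma loss_lb17 (B:ℝ) (hB : B ≠ 0) (I : Finset (Fin 2)) (hI : I.card ≤ 1)
    (x : ℝ×ℝ) (hx : x ∈ supp17 B) :
    B^2/4 ≤ ∑ j : Fin 2, (coord17 j x -
      (if j ∈ I then coord17 j x else condMean17 B I x j))^2 := by
  obtain ⟨a, ha⟩ := Finset.card_le_one_iff_subset_singleton.mp hI
  simp only [supp17, Finset.mem_insert, Finset.mem_singleton] at hx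
  rcases Finset.subset_singleton_iff.mp ha with rfl | rfl
  · rcases hx with rfl|rfl|rfl|rfl <;>
    · norm_num [condMean17, supp17, coord17, Finset.sum_insert, Finset.mem_insert,
        Fin.sum_univ_two, Finset.filter_insert, Finset.filter_singleton,
        Finset.mem_singleton, Prod.ext_iff, hB, Ne.symm hB]
      nlinarith [sq_nonneg B]
  · fin_cases a <;> rcases hx with rfl|rfl|rfl|rfl <;>
    · norm_num [condMean17, supp17, coord17, Finset.sum_insert, Finset.mem_insert,
        Fin.sum_univ_two, Finset.filter_insert, Finset.filter_singleton,
        Finset.mem_singleton, Prod.ext_iff, forall_eq, hB, Ne.symm hB]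
      nlinarith [sq_nonneg B]

lemma card_supp17 (B:ℝ) (hB : B ≠ 0) : (supp17 B).card = 4 := by
  norm_num [supp17, Finset.mem_insert, Finset.mem_singleton, Prod.ext_iff,
    hB, Ne.symm hB]

lemma opt17 (B:ℝ) (hB : B ≠ 0) (pol : ℝ × ℝ → Finset (Fin 2))
    (hpol : ∀ x, (pol x).card ≤ 1) : RN17 B naivePol17 ≤ RN17 B pol := by
  rw [rn_naive17 B hB]
  have h : ∀ x ∈ supp17 B, B^2/4 ≤ ∑ j : Fin 2, (coord17 j x - predN17 B pol x j)^2 := by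
    intro x hx
    simpa [predN17] using loss_lb17 B hB (pol x) (hpol x) x hx
  have h2 : (1/4 : ℝ) * ∑ x ∈ supp17 B, (B^2/4) ≤ RN17 B pol := by
    unfold RN17
    exact mul_le_mul_of_nonneg_left (Finset.sum_le_sum h) (by norm_num)
  calc B^2/4 = (1/4 : ℝ) * ∑ x ∈ supp17 B, (B^2/4) := by
        rw [Finset.sum_const, card_supp17 B hB]; ring
    _ ≤ RN17 B pol := h2

theorem stmt_17 (B : ℝ) (hB : 0 < B) :
    -- (i) fully revealing for a sophisticated agent, hence zero risk
    Set.InjOn (sig17 sophPol17) ↑(supp17 B) ∧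
    RS17 B sophPol17 = 0 ∧
    -- (ii) the constant policy is naive-optimal with risk B²/4, and since its
    -- selection is constant, a sophisticated agent gains nothing
    RN17 B naivePol17 = B ^ 2 / 4 ∧
    (∀ pol : ℝ × ℝ → Finset (Fin 2), (∀ x, (pol x).card ≤ 1) →
      RN17 B naivePol17 ≤ RN17 B pol) ∧
    RS17 B naivePol17 = RN17 B naivePol17 ∧
    -- price of simplicity
    RS17 B naivePol17 - RS17 B sophPol17 = B ^ 2 / 4 := by
  have h := hB.ne'
  refine ⟨inj17 B h, rs_soph17 B h, rn_naive17 B h, fun pol hpol => opt17 B h pol hpol,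
    ?_, ?_⟩
  · rw [rs_naive17 B h, rn_naive17 B h]
  · rw [rs_naive17 B h, rs_soph17 B h]; ring
end
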